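/- Let x(z) = log z − s Q(z) with Q(z) = Σ_{j=1}^d q_j z^j over the field K = ℚ(s, q_1,...,q_d), and let A_{μ,j} = j·[z^{μ−j}] e^{μ s Q(z)} for 1 ≤ j ≤ d and μ ≥ 1. Then for fixed j, the K-valued sequences μ ↦ A_{μ,j}·μ^m (m ≥ 0 ranging over nonnegative integers, j over {1,...,d}) are K-linearly independent as functions of μ ∈ ℤ_{>0}. -/

import Mathlib

open Finset

/-- `|Aut(λ)|`: the product of the factorials of the multiplicities of the parts. -/
def autCard {n : ℕ} (P : n.Partition) : ℕ :=
  ∏ i ∈ P.parts.toFinset, (P.parts.count i).factorial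

/-- The field `K = ℚ(s, q_1, …, q_d)` of rational functions, with `s` the variable of index
`0` and `q_j` the variable of index `j`. -/
abbrev Kd (d : ℕ) := FractionRing (MvPolynomial (Fin (d + 1)) ℚ)

/-- The variable `s` in `K`. -/
noncomputable def sVar (d : ℕ) : Kd d :=
  algebraMap (MvPolynomial (Fin (d + 1)) ℚ) (Kd d) (MvPolynomial.X 0)

/-- The variables `q_j` in `K` for `1 ≤ j ≤ d` (and `0` otherwise). -/
noncomputable def qVar (d : ℕ) (j : ℕ) : Kd d :=
  if h : 1 ≤ j ∧ j ≤ d then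
    algebraMap (MvPolynomial (Fin (d + 1)) ℚ) (Kd d)
      (MvPolynomial.X (⟨j, by omega⟩ : Fin (d + 1)))
  else 0

/-- `A_{μ,j} = j · [z^{μ−j}] e^{μ s Q(z)} = j ∑_{λ ⊢ μ−j} (μs)^{ℓ(λ)} q_λ/|Aut(λ)|`
(zero when `μ < j`). -/
noncomputable def Aseq (d : ℕ) (j μ : ℕ) : Kd d :=
  if j ≤ μ then
    (j : Kd d) * ∑ P : (μ - j).Partition,
      ((autCard P : Kd d))⁻¹ * ((μ : Kd d) * sVar d) ^ (Multiset.card P.parts) *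
        (P.parts.map (qVar d)).prod
  else 0

-- basics
noncomputable instance (d : ℕ) : CharZero (Kd d) :=
  charZero_of_injective_algebraMap
    (IsFractionRing.injective (MvPolynomial (Fin (d + 1)) ℚ) (Kd d))

lemma algMap_inj (d : ℕ) :
    Function.Injective (algebraMap (MvPolynomial (Fin (d + 1)) ℚ) (Kd d)) :=
  IsFractionRing.injective _ _

lemma sVar_ne_zero (d : ℕ) : sVar d ≠ 0 := by
  intro h
  exact MvPolynomial.X_ne_zero _ ((algMap_inj d) (h.trans (map_zero _).symm))

lemma qVar_ne_zero (d : ℕ) {j : ℕ} (h1 : 1 ≤ j) (h2 : j ≤ d) : qVar d j ≠ 0 := by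
  rw [qVar, dif_pos ⟨h1, h2⟩]
  intro h
  exact MvPolynomial.X_ne_zero _ ((algMap_inj d) (h.trans (map_zero _).symm))

lemma qVar_eq_zero (d : ℕ) {j : ℕ} (h : d < j ∨ j = 0) : qVar d j = 0 := by
  rw [qVar, dif_neg]; omega

lemma autCard_cast_ne_zero (d : ℕ) {n : ℕ} (P : n.Partition) : ((autCard P : Kd d)) ≠ 0 := by
  have : 0 < autCard P := Finset.prod_pos fun i _ => Nat.factorial_pos _
  exact_mod_cast this.ne'

-- the partition sum E_n (with plain s)
noncomputable def Epart (d : ℕ) (n : ℕ) : Kd d :=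
  ∑ P : n.Partition,
    ((autCard P : Kd d))⁻¹ * sVar d ^ (Multiset.card P.parts) * (P.parts.map (qVar d)).prod

instance : Unique (Nat.Partition 0) where
  default := ⟨0, by simp, by simp⟩
  uniq := by
    intro P
    ext1
    by_contra h
    obtain ⟨a, ha⟩ := Multiset.exists_mem_of_ne_zero (by simpa using h)
    have h1 : 0 < a := P.parts_pos ha
    have h2 : a ≤ P.parts.sum := Multiset.single_le_sum (fun x _ => Nat.zero_le x) _ ha
    rw [P.parts_sum] at h2
    omega

lemma Epart_zero (d : ℕ) : Epart d 0 = 1 := by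
  rw [Epart, Fintype.sum_unique]
  show ((autCard (default : Nat.Partition 0) : Kd d))⁻¹ * _ ^ (Multiset.card (0:Multiset ℕ)) *
      ((Multiset.map (qVar d) 0).prod) = 1
  simp [autCard]

-- multiset: sum = ∑ count * i
lemma Multiset.sum_eq_sum_count (m : Multiset ℕ) :
    m.sum = ∑ i ∈ m.toFinset, m.count i * i := by
  induction m using Multiset.induction_on with
  | empty => simp
  | cons a t ih =>
    rw [Multiset.sum_cons, ih, Multiset.toFinset_cons]
    by_cases ha : a ∈ t.toFinset
    · rw [Finset.insert_eq_self.mpr ha]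
      have hR : ∑ i ∈ t.toFinset, Multiset.count i (a ::ₘ t) * i
          = Multiset.count a (a ::ₘ t) * a + ∑ x ∈ t.toFinset.erase a, Multiset.count x (a ::ₘ t) * x :=
        (Finset.add_sum_erase _ _ ha).symm
      have hE : ∀ x ∈ t.toFinset.erase a, Multiset.count x (a ::ₘ t) * x = Multiset.count x t * x := by
        intro x hx
        rw [Multiset.count_cons_of_ne (Finset.ne_of_mem_erase hx)]
      have hL : ∑ i ∈ t.toFinset, Multiset.count i t * i
          = Multiset.count a t * a + ∑ x ∈ t.toFinset.erase a, Multiset.count x t * x :=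
        (Finset.add_sum_erase _ _ ha).symm
      rw [hR, Finset.sum_congr rfl hE, hL, Multiset.count_cons_self]
      ring
    · rw [Finset.sum_insert ha, Multiset.count_cons_self]
      have ha' : a ∉ t := by simpa using ha
      have hc : Multiset.count a t = 0 := Multiset.count_eq_zero.mpr ha'
      have : ∀ x ∈ t.toFinset, Multiset.count x (a ::ₘ t) * x = Multiset.count x t * x := by
        intro x hx
        rw [Multiset.count_cons_of_ne]
        rintro rfl; exact ha hx
      rw [Finset.sum_congr rfl this, hc]
      ring

-- autCard of cons at the multiset level
lemma autM_cons (i : ℕ) (m : Multiset ℕ) :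
    ∏ x ∈ (i ::ₘ m).toFinset, ((i ::ₘ m).count x).factorial
      = (m.count i + 1) * ∏ x ∈ m.toFinset, (m.count x).factorial := by
  rw [Multiset.toFinset_cons]
  by_cases hi : i ∈ m.toFinset
  · rw [Finset.insert_eq_self.mpr hi]
    rw [← Finset.mul_prod_erase _ _ hi, ← Finset.mul_prod_erase _ (fun x => (m.count x).factorial) hi]
    have : ∀ x ∈ m.toFinset.erase i, ((i ::ₘ m).count x).factorial = (m.count x).factorial := by
      intro x hx
      rw [Multiset.count_cons_of_ne (Finset.ne_of_mem_erase hx)]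
    rw [Finset.prod_congr rfl this, Multiset.count_cons_self, Nat.factorial_succ]
    ring
  · rw [Finset.prod_insert hi, Multiset.count_cons_self]
    have ha' : i ∉ m := by simpa using hi
    have hc : m.count i = 0 := Multiset.count_eq_zero.mpr ha'
    have : ∀ x ∈ m.toFinset, ((i ::ₘ m).count x).factorial = (m.count x).factorial := by
      intro x hx
      rw [Multiset.count_cons_of_ne]
      rintro rfl; exact hi hx
    rw [Finset.prod_congr rfl this, hc]
    simp [Nat.factorial]

-- the key combinatorial step: removing one part equal to i
lemma Epart_count (d n i : ℕ) (h1 : 1 ≤ i) (hin : i ≤ n) :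
    ∑ P : n.Partition, (P.parts.count i : Kd d) *
        (((autCard P : Kd d))⁻¹ * sVar d ^ (Multiset.card P.parts) * (P.parts.map (qVar d)).prod)
      = sVar d * qVar d i * Epart d (n - i) := by
  classical
  rw [Epart, Finset.mul_sum]
  rw [← Finset.sum_filter_of_ne (p := fun P : n.Partition => i ∈ P.parts)
      (fun x _ hx => by
        by_contra hmem
        exact hx (by rw [Multiset.count_eq_zero.mpr hmem]; simp))]
  refine Finset.sum_bij'
    (i := fun (P : n.Partition) (hP : P ∈ Finset.univ.filter fun P : n.Partition => i ∈ P.parts) =>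
      (⟨P.parts.erase i,
        fun {x} hx => P.parts_pos (Multiset.mem_of_mem_erase hx),
        by
          have hmem : i ∈ P.parts := (Finset.mem_filter.mp hP).2
          have := congrArg Multiset.sum (Multiset.cons_erase hmem)
          rw [Multiset.sum_cons, P.parts_sum] at this
          omega⟩ : (n - i).Partition))
    (j := fun (P' : (n - i).Partition) _ =>
      (⟨i ::ₘ P'.parts,
        fun {x} hx => by
          rcases Multiset.mem_cons.mp hx with rfl | hx
          · omega
          · exact P'.parts_pos hx,
        by rw [Multiset.sum_cons, P'.parts_sum]; omega⟩ : n.Partition))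
    ?_ ?_ ?_ ?_ ?_
  · intro a ha; exact Finset.mem_univ _
  · intro a ha
    simp only [Finset.mem_filter, Finset.mem_univ, true_and]
    exact Multiset.mem_cons_self _ _
  · intro a ha
    ext1
    exact Multiset.cons_erase (Finset.mem_filter.mp ha).2
  · intro a ha
    ext1
    exact Multiset.erase_cons_head _ _
  · intro P hP
    have hmem : i ∈ P.parts := (Finset.mem_filter.mp hP).2
    -- rewrite P.parts as i ::ₘ (erase)
    set m := P.parts.erase i with hm
    have hPm : P.parts = i ::ₘ m := (Multiset.cons_erase hmem).symm
    have hcount : P.parts.count i = m.count i + 1 := by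
      rw [hPm, Multiset.count_cons_self]
    have haut : autCard P = (m.count i + 1) * ∏ x ∈ m.toFinset, (m.count x).factorial := by
      show (∏ x ∈ P.parts.toFinset, (P.parts.count x).factorial) = _
      rw [hPm]
      exact autM_cons i m
    have hA : ((∏ x ∈ m.toFinset, (m.count x).factorial : ℕ) : Kd d) ≠ 0 := by
      have : 0 < ∏ x ∈ m.toFinset, (m.count x).factorial :=
        Finset.prod_pos fun _ _ => Nat.factorial_pos _
      exact_mod_cast this.ne'
    have hC : ((m.count i + 1 : ℕ) : Kd d) ≠ 0 := by exact_mod_cast Nat.succ_ne_zero (Multiset.count i m)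
    simp only [autCard, hPm, hcount, autM_cons, Multiset.card_cons, Multiset.map_cons,
      Multiset.prod_cons, Multiset.erase_cons_head, Multiset.count_cons_self]
    push_cast
    push_cast at hA hC
    field_simp
    ring

lemma Epart_rec (d n : ℕ) (hn : 1 ≤ n) :
    (n : Kd d) * Epart d n
      = ∑ i ∈ Finset.Icc 1 n, (i : Kd d) * (sVar d * qVar d i * Epart d (n - i)) := by
  classical
  have hsplit : ∀ P : n.Partition,
      (n : Kd d) = ∑ i ∈ Finset.Icc 1 n, (P.parts.count i : Kd d) * (i : Kd d) := by
    intro P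
    have h1 : P.parts.sum = ∑ i ∈ P.parts.toFinset, P.parts.count i * i :=
      Multiset.sum_eq_sum_count _
    have h2 : P.parts.toFinset ⊆ Finset.Icc 1 n := by
      intro x hx
      have hx' : x ∈ P.parts := Multiset.mem_toFinset.mp hx
      have hp : 0 < x := P.parts_pos hx'
      have hs : x ≤ P.parts.sum := Multiset.single_le_sum (fun y _ => Nat.zero_le y) _ hx'
      rw [P.parts_sum] at hs
      exact Finset.mem_Icc.mpr ⟨hp, hs⟩
    have h3 : P.parts.sum = ∑ i ∈ Finset.Icc 1 n, P.parts.count i * i := by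
      rw [h1]
      refine Finset.sum_subset h2 ?_
      intro x _ hx
      rw [Multiset.count_eq_zero.mpr (fun h => hx (Multiset.mem_toFinset.mpr h))]
      ring
    have h4 : n = ∑ i ∈ Finset.Icc 1 n, P.parts.count i * i := by
      rw [← h3]; exact P.parts_sum.symm
    calc (n : Kd d) = ((∑ i ∈ Finset.Icc 1 n, P.parts.count i * i : ℕ) : Kd d) := by
          exact_mod_cast congrArg (Nat.cast : ℕ → Kd d) h4
      _ = ∑ i ∈ Finset.Icc 1 n, (P.parts.count i : Kd d) * (i : Kd d) := by
          push_cast; rfl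
  rw [Epart, Finset.mul_sum]
  have hP : ∀ P : n.Partition,
      (n : Kd d) * (((autCard P : Kd d))⁻¹ * sVar d ^ (Multiset.card P.parts) *
        (P.parts.map (qVar d)).prod)
      = ∑ i ∈ Finset.Icc 1 n, (i : Kd d) * ((P.parts.count i : Kd d) *
          (((autCard P : Kd d))⁻¹ * sVar d ^ (Multiset.card P.parts) *
            (P.parts.map (qVar d)).prod)) := by
    intro P
    rw [hsplit P, Finset.sum_mul]
    exact Finset.sum_congr rfl fun i _ => by ring
  rw [Finset.sum_congr rfl fun P _ => hP P, Finset.sum_comm]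
  refine Finset.sum_congr rfl fun i hi => ?_
  rw [← Finset.mul_sum, Epart_count d n i (Finset.mem_Icc.mp hi).1 (Finset.mem_Icc.mp hi).2]

noncomputable def Ew (d : ℕ) (n : ℤ) : Kd d := if 0 ≤ n then Epart d n.toNat else 0

lemma Ew_neg (d : ℕ) {n : ℤ} (h : n < 0) : Ew d n = 0 := by
  rw [Ew, if_neg (by omega)]

lemma Ew_ofNat (d : ℕ) (n : ℕ) : Ew d (n : ℤ) = Epart d n := by
  rw [Ew, if_pos (by positivity)]
  simp

lemma Ew_master (d : ℕ) (hd : 1 ≤ d) (μ m : ℕ) (hμ : 1 ≤ μ) (hm : 1 ≤ m) :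
    (μ : Kd d) * Ew d ((μ : ℤ) - m)
      = (m : Kd d) * Ew d ((μ : ℤ) - m)
        + ∑ i ∈ Finset.Icc 1 d, (i : Kd d) * sVar d * qVar d i * Ew d ((μ : ℤ) - m - i) := by
  rcases lt_trichotomy μ m with h | h | h
  · have h0 : Ew d ((μ : ℤ) - m) = 0 := Ew_neg d (by omega)
    have h1 : ∀ i ∈ Finset.Icc 1 d, (i : Kd d) * sVar d * qVar d i * Ew d ((μ:ℤ) - m - i) = 0 := by
      intro i hi
      rw [Ew_neg d (by have := (Finset.mem_Icc.mp hi).1; omega)]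
      ring
    rw [h0, Finset.sum_congr rfl h1]
    simp
  · subst h
    have h1 : ∀ i ∈ Finset.Icc 1 d, (i : Kd d) * sVar d * qVar d i * Ew d ((μ:ℤ) - μ - i) = 0 := by
      intro i hi
      rw [Ew_neg d (by have := (Finset.mem_Icc.mp hi).1; omega)]
      ring
    rw [Finset.sum_congr rfl h1]
    simp
  · have hn1 : 1 ≤ μ - m := by omega
    have hμn : (μ : Kd d) = (m : Kd d) + ((μ - m : ℕ) : Kd d) := by
      rw [Nat.cast_sub (le_of_lt h)]
      ring
    have hE : Ew d ((μ : ℤ) - m) = Epart d (μ - m) := by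
      have h6 : (μ : ℤ) - m = ((μ - m : ℕ) : ℤ) := by omega
      rw [h6, Ew_ofNat]
    rw [hE, hμn, add_mul]
    congr 1
    have hrec := Epart_rec d (μ - m) hn1
    have hbig : ∀ N, μ - m ≤ N → d ≤ N →
        ∑ i ∈ Finset.Icc 1 (μ - m), (i : Kd d) * (sVar d * qVar d i * Epart d (μ - m - i))
          = ∑ i ∈ Finset.Icc 1 N, (i : Kd d) * sVar d * qVar d i * Ew d (((μ - m : ℕ) : ℤ) - i) := by
      intro N hnN hdN
      have step1 : ∑ i ∈ Finset.Icc 1 (μ - m), (i : Kd d) * (sVar d * qVar d i * Epart d (μ - m - i))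
          = ∑ i ∈ Finset.Icc 1 (μ - m), (i : Kd d) * sVar d * qVar d i * Ew d (((μ - m : ℕ) : ℤ) - i) := by
        refine Finset.sum_congr rfl fun i hi => ?_
        have hin : i ≤ μ - m := (Finset.mem_Icc.mp hi).2
        have hcast : ((μ - m : ℕ) : ℤ) - i = ((μ - m - i : ℕ) : ℤ) := by omega
        rw [hcast, Ew_ofNat]
        ring
      rw [step1]
      refine Finset.sum_subset (Finset.Icc_subset_Icc le_rfl hnN) ?_
      intro x hx hnx
      have h1 : 1 ≤ x := (Finset.mem_Icc.mp hx).1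
      have h2 : μ - m < x := by
        rcases Finset.mem_Icc.mp hx with ⟨a, b⟩
        by_contra hc
        exact hnx (Finset.mem_Icc.mpr ⟨a, by omega⟩)
      rw [Ew_neg d (by omega)]
      ring
    have hsmall : ∑ i ∈ Finset.Icc 1 d, (i : Kd d) * sVar d * qVar d i * Ew d (((μ - m:ℕ) : ℤ) - i)
        = ∑ i ∈ Finset.Icc 1 (max (μ - m) d), (i : Kd d) * sVar d * qVar d i * Ew d (((μ - m:ℕ) : ℤ) - i) := by
      refine Finset.sum_subset (Finset.Icc_subset_Icc le_rfl (le_max_right _ d)) ?_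
      intro x hx hnx
      have h1 : 1 ≤ x := (Finset.mem_Icc.mp hx).1
      have h2 : d < x := by
        rcases Finset.mem_Icc.mp hx with ⟨a, b⟩
        by_contra hc
        exact hnx (Finset.mem_Icc.mpr ⟨a, by omega⟩)
      rw [qVar_eq_zero d (Or.inl h2)]
      ring
    have hEq : ∀ i : ℕ, ((μ - m : ℕ) : ℤ) - i = (μ : ℤ) - m - i := by intro i; omega
    calc ((μ - m : ℕ) : Kd d) * Epart d (μ - m)
        = ∑ i ∈ Finset.Icc 1 (max (μ - m) d),
            (i : Kd d) * sVar d * qVar d i * Ew d (((μ - m : ℕ) : ℤ) - i) := by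
          rw [hrec, hbig (max (μ - m) d) (le_max_left _ _) (le_max_right _ _)]
      _ = ∑ i ∈ Finset.Icc 1 d, (i : Kd d) * sVar d * qVar d i * Ew d ((μ : ℤ) - m - i) := by
          rw [← hsmall]
          exact Finset.sum_congr rfl fun i _ => by rw [hEq i]

open Polynomial in
noncomputable def Phi (d : ℕ) : Polynomial (Kd d) →ₗ[Kd d] Polynomial (Kd d) :=
  (LinearMap.mulLeft (Kd d) (X : Polynomial (Kd d))).comp
      (Polynomial.derivative : Polynomial (Kd d) →ₗ[Kd d] Polynomial (Kd d))
    + ∑ i ∈ Finset.Icc 1 d,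
        LinearMap.mulLeft (Kd d) (Polynomial.C ((i : Kd d) * sVar d * qVar d i) * X ^ i)

open Polynomial in
lemma Phi_apply (d : ℕ) (p : Polynomial (Kd d)) :
    Phi d p = X * Polynomial.derivative p
      + ∑ i ∈ Finset.Icc 1 d, Polynomial.C ((i : Kd d) * sVar d * qVar d i) * X ^ i * p := by
  simp only [Phi, LinearMap.add_apply, LinearMap.comp_apply, LinearMap.mulLeft_apply,
    LinearMap.coe_sum, Finset.sum_apply]

noncomputable def toFinsuppLM (d : ℕ) : Polynomial (Kd d) →ₗ[Kd d] (ℕ →₀ Kd d) where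
  toFun p := p.toFinsupp.coeff
  map_add' p q := by rw [Polynomial.toFinsupp_add]; rfl
  map_smul' c p := by rw [Polynomial.toFinsupp_smul]; rfl

noncomputable def Lam (d : ℕ) (μ : ℕ) : Polynomial (Kd d) →ₗ[Kd d] Kd d :=
  (Finsupp.linearCombination (Kd d) (fun m : ℕ => Ew d ((μ : ℤ) - m))).comp (toFinsuppLM d)

lemma Lam_monomial (d : ℕ) (μ : ℕ) (k : ℕ) (c : Kd d) :
    Lam d μ (Polynomial.monomial k c) = c * Ew d ((μ : ℤ) - k) := by
  rw [Lam, LinearMap.comp_apply]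
  show Finsupp.linearCombination (Kd d) (fun m : ℕ => Ew d ((μ : ℤ) - m))
    ((Polynomial.monomial k c).toFinsupp.coeff) = _
  rw [Polynomial.toFinsupp_monomial, AddMonoidAlgebra.coeff_single, Finsupp.linearCombination_single, smul_eq_mul]

open Polynomial in
lemma Phi_monomial (d : ℕ) (k : ℕ) (hk : 1 ≤ k) (c : Kd d) :
    Phi d (Polynomial.monomial k c)
      = Polynomial.monomial k (c * k)
        + ∑ i ∈ Finset.Icc 1 d, Polynomial.monomial (k + i) ((i : Kd d) * sVar d * qVar d i * c) := by
  rw [Phi_apply, Polynomial.derivative_monomial]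
  congr 1
  · rw [← Polynomial.monomial_one_one_eq_X, Polynomial.monomial_mul_monomial, one_mul]
    rw [show 1 + (k - 1) = k from by omega]
  · refine Finset.sum_congr rfl fun i _ => ?_
    rw [← Polynomial.monomial_zero_left, Polynomial.X_pow_eq_monomial,
      Polynomial.monomial_mul_monomial, Polynomial.monomial_mul_monomial]
    rw [show (0 : ℕ) + i + k = k + i from by omega]
    congr 1
    ring

open Polynomial in
lemma Lam_Phi_monomial (d : ℕ) (hd : 1 ≤ d) (μ : ℕ) (hμ : 1 ≤ μ) (k : ℕ) (hk : 1 ≤ k) (c : Kd d) :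
    Lam d μ (Phi d (Polynomial.monomial k c)) = (μ : Kd d) * Lam d μ (Polynomial.monomial k c) := by
  rw [Phi_monomial d k hk c, map_add, map_sum, Lam_monomial, Lam_monomial]
  have hterm : ∀ i ∈ Finset.Icc 1 d,
      Lam d μ (Polynomial.monomial (k + i) ((i : Kd d) * sVar d * qVar d i * c))
        = c * ((i : Kd d) * sVar d * qVar d i * Ew d ((μ : ℤ) - k - i)) := by
    intro i hi
    rw [Lam_monomial]
    have : (μ : ℤ) - (k + i : ℕ) = (μ : ℤ) - k - i := by push_cast; ring
    rw [this]
    ring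
  rw [Finset.sum_congr rfl hterm, ← Finset.mul_sum]
  have hmas := Ew_master d hd μ k hμ hk
  calc c * (k : Kd d) * Ew d ((μ:ℤ) - k)
        + c * (∑ i ∈ Finset.Icc 1 d, (i : Kd d) * sVar d * qVar d i * Ew d ((μ:ℤ) - k - i))
      = c * ((k : Kd d) * Ew d ((μ:ℤ) - k)
          + ∑ i ∈ Finset.Icc 1 d, (i : Kd d) * sVar d * qVar d i * Ew d ((μ:ℤ) - k - i)) := by ring
    _ = c * ((μ : Kd d) * Ew d ((μ:ℤ) - k)) := by rw [← hmas]
    _ = (μ : Kd d) * (c * Ew d ((μ:ℤ) - k)) := by ring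

open Polynomial in
lemma Phi_coeff_zero (d : ℕ) (p : Polynomial (Kd d)) (hp : p.coeff 0 = 0) :
    (Phi d p).coeff 0 = 0 := by
  rw [Phi_apply]
  rw [Polynomial.coeff_add, Polynomial.finset_sum_coeff]
  rw [Polynomial.mul_coeff_zero, Polynomial.coeff_X_zero, zero_mul]
  have : ∀ i ∈ Finset.Icc 1 d,
      (Polynomial.C ((i : Kd d) * sVar d * qVar d i) * X ^ i * p).coeff 0 = 0 := by
    intro i hi
    rw [Polynomial.mul_coeff_zero, Polynomial.mul_coeff_zero, hp]
    ring
  rw [Finset.sum_congr rfl this]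
  simp

open Polynomial in
lemma Lam_Phi (d : ℕ) (hd : 1 ≤ d) (μ : ℕ) (hμ : 1 ≤ μ) (p : Polynomial (Kd d))
    (hp : p.coeff 0 = 0) :
    Lam d μ (Phi d p) = (μ : Kd d) * Lam d μ p := by
  conv_lhs => rw [p.as_sum_support]
  conv_rhs => rw [p.as_sum_support]
  rw [map_sum, map_sum, map_sum, Finset.mul_sum]
  refine Finset.sum_congr rfl fun k hk => ?_
  have hk1 : 1 ≤ k := by
    rcases Nat.eq_zero_or_pos k with rfl | h
    · exact absurd hp (Polynomial.mem_support_iff.mp hk)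
    · exact h
  exact Lam_Phi_monomial d hd μ hμ k hk1 _

open Polynomial in
lemma Phi_iter_coeff_zero (d : ℕ) (b k : ℕ) (hk : 1 ≤ k) :
    ((Phi d)^[b] (Polynomial.monomial k 1)).coeff 0 = 0 := by
  induction b with
  | zero =>
    simp only [Function.iterate_zero, id_eq]
    rw [Polynomial.coeff_monomial, if_neg (by omega)]
  | succ b ih =>
    rw [Function.iterate_succ_apply']
    exact Phi_coeff_zero d _ ih

open Polynomial in
lemma Lam_Phi_iter (d : ℕ) (hd : 1 ≤ d) (μ : ℕ) (hμ : 1 ≤ μ) (b k : ℕ) (hk : 1 ≤ k) :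
    Lam d μ ((Phi d)^[b] (Polynomial.monomial k 1)) = (μ : Kd d) ^ b * Ew d ((μ : ℤ) - k) := by
  induction b with
  | zero =>
    simp only [Function.iterate_zero, id_eq, pow_zero, one_mul]
    rw [Lam_monomial, one_mul]
  | succ b ih =>
    rw [Function.iterate_succ_apply', Lam_Phi d hd μ hμ _ (Phi_iter_coeff_zero d b k hk), ih]
    ring

open Polynomial in
lemma Phi_coeff (d : ℕ) (p : Polynomial (Kd d)) (m : ℕ) :
    (Phi d p).coeff m
      = (m : Kd d) * p.coeff m
        + ∑ i ∈ Finset.Icc 1 d, ((i : Kd d) * sVar d * qVar d i) *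
            (if i ≤ m then p.coeff (m - i) else 0) := by
  rw [Phi_apply, Polynomial.coeff_add, Polynomial.finset_sum_coeff]
  congr 1
  · -- coeff of X * derivative p
    cases m with
    | zero => simp
    | succ n =>
      rw [Polynomial.coeff_X_mul, Polynomial.coeff_derivative]
      push_cast
      ring
  · refine Finset.sum_congr rfl fun i hi => ?_
    have hcomm : Polynomial.C ((i : Kd d) * sVar d * qVar d i) * X ^ i * p
        = Polynomial.C ((i : Kd d) * sVar d * qVar d i) * (p * X ^ i) := by ring
    rw [hcomm, Polynomial.coeff_C_mul, Polynomial.coeff_mul_X_pow']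

open Polynomial in
lemma Phi_iter_top (d : ℕ) (hd : 1 ≤ d) (k : ℕ) (hk : 1 ≤ k) (b : ℕ) :
    (∀ m, k + d * b < m → ((Phi d)^[b] (Polynomial.monomial k 1)).coeff m = 0)
    ∧ ((Phi d)^[b] (Polynomial.monomial k 1)).coeff (k + d * b)
        = ((d : Kd d) * sVar d * qVar d d) ^ b := by
  induction b with
  | zero =>
    constructor
    · intro m hm
      simp only [Function.iterate_zero, id_eq]
      rw [Polynomial.coeff_monomial, if_neg (by omega)]
    · simp only [Function.iterate_zero, id_eq, Nat.mul_zero, Nat.add_zero, pow_zero]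
      rw [Polynomial.coeff_monomial, if_pos rfl]
  | succ b ih =>
    obtain ⟨ihb, iht⟩ := ih
    set p := (Phi d)^[b] (Polynomial.monomial k (1 : Kd d)) with hp
    have hstep : (Phi d)^[b+1] (Polynomial.monomial k (1 : Kd d)) = Phi d p :=
      Function.iterate_succ_apply' _ _ _
    constructor
    · intro m hm
      have hdb : d * (b+1) = d * b + d := by ring
      rw [hstep, Phi_coeff]
      rw [ihb m (by omega)]
      have : ∀ i ∈ Finset.Icc 1 d, ((i : Kd d) * sVar d * qVar d i) *
          (if i ≤ m then p.coeff (m - i) else 0) = 0 := by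
        intro i hi
        rcases Finset.mem_Icc.mp hi with ⟨h1, h2⟩
        split
        · rw [ihb (m - i) (by omega)]; ring
        · ring
      rw [Finset.sum_congr rfl this]
      simp
    · rw [hstep, Phi_coeff]
      have hdb : d * (b+1) = d * b + d := by ring
      rw [ihb (k + d * (b+1)) (by omega)]
      have hsum : ∑ i ∈ Finset.Icc 1 d, ((i : Kd d) * sVar d * qVar d i) *
          (if i ≤ k + d * (b+1) then p.coeff (k + d * (b+1) - i) else 0)
          = ((d : Kd d) * sVar d * qVar d d) * ((d : Kd d) * sVar d * qVar d d) ^ b := by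
        rw [Finset.sum_eq_single d]
        · rw [if_pos (by omega), show k + d * (b+1) - d = k + d * b from by omega, iht]
        · intro i hi hne
          rcases Finset.mem_Icc.mp hi with ⟨h1, h2⟩
          rw [if_pos (by omega), ihb (k + d * (b+1) - i) (by omega)]
          ring
        · intro hd'
          exact absurd (Finset.mem_Icc.mpr ⟨hd, le_rfl⟩) hd'
      rw [hsum]
      ring

open Polynomial in
lemma Lam_vanish (d : ℕ) (P : Polynomial (Kd d)) (h0 : P.coeff 0 = 0)
    (hv : ∀ μ : ℕ, 1 ≤ μ → Lam d μ P = 0) : P = 0 := by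
  by_contra hP
  set m0 := P.natTrailingDegree with hm0def
  have htc : P.coeff m0 ≠ 0 := fun h => hP (Polynomial.trailingCoeff_eq_zero.mp h)
  have hm0 : 1 ≤ m0 := by
    rcases Nat.eq_zero_or_pos m0 with h | h
    · exact absurd (h ▸ htc) (by rw [h0]; simp)
    · exact h
  have hL := hv m0 hm0
  rw [Lam, LinearMap.comp_apply] at hL
  have hL' : (Finsupp.linearCombination (Kd d) (fun m : ℕ => Ew d ((m0 : ℤ) - m)))
      P.toFinsupp.coeff = 0 := hL
  rw [Finsupp.linearCombination_apply, Finsupp.sum] at hL'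
  have hsupp : P.toFinsupp.coeff.support = P.support := Polynomial.support_toFinsupp P
  rw [hsupp] at hL'
  have hsingle : ∑ m ∈ P.support, P.toFinsupp.coeff m • Ew d ((m0 : ℤ) - m) = P.coeff m0 := by
    rw [Finset.sum_eq_single m0]
    · rw [Polynomial.toFinsupp_apply]
      rw [show (m0 : ℤ) - m0 = ((0 : ℕ) : ℤ) from by omega, Ew_ofNat, Epart_zero, smul_eq_mul,
        mul_one]
    · intro m hm hne
      have hge : m0 ≤ m := Polynomial.natTrailingDegree_le_of_ne_zero
        (Polynomial.mem_support_iff.mp hm)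
      have : Ew d ((m0 : ℤ) - m) = 0 := Ew_neg d (by omega)
      rw [this, smul_zero]
    · intro hns
      exact absurd (Polynomial.mem_support_iff.mpr htc) hns
  rw [hsingle] at hL'
  exact htc hL'

lemma unique_rep {d γ1 γ2 β1 β2 : ℕ} (h1 : γ1 < d) (h2 : γ2 < d)
    (he : γ1 + d * β1 = γ2 + d * β2) : γ1 = γ2 ∧ β1 = β2 := by
  rcases Nat.lt_trichotomy β1 β2 with h | h | h
  · exfalso
    have : d * β1 + d ≤ d * β2 := by
      have h3 : d * (β1 + 1) ≤ d * β2 := Nat.mul_le_mul_left d h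
      have h4 : d * (β1 + 1) = d * β1 + d := by ring
      omega
    omega
  · subst h; omega
  · exfalso
    have : d * β2 + d ≤ d * β1 := by
      have h3 : d * (β2 + 1) ≤ d * β1 := Nat.mul_le_mul_left d h
      have h4 : d * (β2 + 1) = d * β2 + d := by ring
      omega
    omega

open Polynomial in
lemma fib_lemma (d : ℕ) (hd : 1 ≤ d) {ι : Type} [DecidableEq ι] :
    ∀ T : Finset ι, ∀ c : ι → Kd d, ∀ γ : ι → ℕ, ∀ β : ι → ℕ,
    (∀ x ∈ T, γ x < d) →
    (∑ x ∈ T, c x • (Phi d)^[β x] (Polynomial.monomial (γ x + 1) (1 : Kd d)) = 0) →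
    ∀ k, ∑ x ∈ T.filter (fun x => γ x + 1 + d * β x = k), c x = 0 := by
  intro T
  induction T using Finset.strongInduction with
  | _ T ih =>
    intro c γ β hγ h0 k
    rcases Finset.eq_empty_or_nonempty T with rfl | hTne
    · simp
    · set κ : ι → ℕ := fun x => γ x + 1 + d * β x with hκ
      obtain ⟨x0, hx0T, hx0⟩ := Finset.exists_mem_eq_sup T hTne κ
      set ks := T.sup κ with hks
      -- the top fiber
      set F := T.filter (fun x => κ x = ks) with hF
      have hx0F : x0 ∈ F := Finset.mem_filter.mpr ⟨hx0T, hx0.symm⟩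
      -- all elements of the top fiber share γ and β values
      have hκx : ∀ x, κ x = γ x + 1 + d * β x := fun _ => rfl
      have hsame : ∀ x ∈ F, γ x = γ x0 ∧ β x = β x0 := by
        intro x hxF
        rcases Finset.mem_filter.mp hxF with ⟨hxT, hxk⟩
        have heq : κ x = κ x0 := by rw [hxk]; exact hx0
        rw [hκx x, hκx x0] at heq
        exact unique_rep (hγ x hxT) (hγ x0 hx0T) (by omega)
      -- coefficient extraction at ks
      have hcoeff := congrArg (fun p => Polynomial.coeff p ks) h0
      simp only [Polynomial.finset_sum_coeff, Polynomial.coeff_smul, Polynomial.coeff_zero]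
        at hcoeff
      rw [← Finset.sum_filter_add_sum_filter_not T (fun x => κ x = ks)] at hcoeff
      have hlow : ∀ x ∈ T.filter (fun x => ¬ κ x = ks),
          c x • ((Phi d)^[β x] (Polynomial.monomial (γ x + 1) (1:Kd d))).coeff ks = 0 := by
        intro x hx
        rcases Finset.mem_filter.mp hx with ⟨hxT, hxk⟩
        have hle : κ x ≤ ks := Finset.le_sup hxT
        rw [hκx x] at hle hxk
        have hlt : γ x + 1 + d * β x < ks := by omega
        rw [(Phi_iter_top d hd (γ x + 1) (by omega) (β x)).1 ks hlt, smul_zero]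
      rw [Finset.sum_congr rfl hlow, Finset.sum_const_zero, add_zero] at hcoeff
      have htop : ∀ x ∈ F,
          c x • ((Phi d)^[β x] (Polynomial.monomial (γ x + 1) (1:Kd d))).coeff ks
            = c x * ((d : Kd d) * sVar d * qVar d d) ^ (β x0) := by
        intro x hxF
        obtain ⟨hg, hb⟩ := hsame x hxF
        have hkx : κ x = ks := (Finset.mem_filter.mp hxF).2
        have hks2 : ks = γ x + 1 + d * β x := by rw [← hkx]
        rw [hks2, (Phi_iter_top d hd (γ x + 1) (by omega) (β x)).2, hb, smul_eq_mul]
      rw [Finset.sum_congr rfl htop, ← Finset.sum_mul] at hcoeff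
      have hne : ((d : Kd d) * sVar d * qVar d d) ^ (β x0) ≠ 0 := by
        apply pow_ne_zero
        refine mul_ne_zero (mul_ne_zero ?_ (sVar_ne_zero d)) (qVar_ne_zero d hd le_rfl)
        exact_mod_cast (by omega : d ≠ 0)
      have hFsum : ∑ x ∈ F, c x = 0 := by
        rcases mul_eq_zero.mp hcoeff with h | h
        · exact h
        · exact absurd h hne
      by_cases hk : k = ks
      · have hfk : T.filter (fun x => γ x + 1 + d * β x = k) = F := by
          rw [hF, hk]
        rw [hfk]
        exact hFsum
      · have hT'sub : T.filter (fun x => ¬ κ x = ks) ⊂ T :=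
          Finset.filter_ssubset.mpr ⟨x0, hx0T, not_not_intro hx0.symm⟩
        have hrel' : ∑ x ∈ T.filter (fun x => ¬ κ x = ks),
            c x • (Phi d)^[β x] (Polynomial.monomial (γ x + 1) (1 : Kd d)) = 0 := by
          have hsplit := Finset.sum_filter_add_sum_filter_not T (fun x => κ x = ks)
            (fun x => c x • (Phi d)^[β x] (Polynomial.monomial (γ x + 1) (1 : Kd d)))
          have hFpart : ∑ x ∈ F, c x • (Phi d)^[β x]
              (Polynomial.monomial (γ x + 1) (1 : Kd d)) = 0 := by
            have hFc : ∀ x ∈ F, c x • (Phi d)^[β x] (Polynomial.monomial (γ x + 1) (1 : Kd d))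
                = c x • (Phi d)^[β x0] (Polynomial.monomial (γ x0 + 1) (1 : Kd d)) := by
              intro x hxF
              obtain ⟨hg, hb⟩ := hsame x hxF
              rw [hg, hb]
            rw [Finset.sum_congr rfl hFc, ← Finset.sum_smul, hFsum, zero_smul]
          rw [← hsplit, ← hF, hFpart, zero_add] at h0
          exact h0
        have hihres := ih (T.filter (fun x => ¬ κ x = ks)) hT'sub c γ β
          (fun x hx => hγ x (Finset.mem_filter.mp hx).1) hrel' k
        have hfilter_eq : (T.filter (fun x => ¬ κ x = ks)).filter
              (fun x => γ x + 1 + d * β x = k)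
            = T.filter (fun x => γ x + 1 + d * β x = k) := by
          rw [Finset.filter_filter]
          refine Finset.filter_congr fun x hx => ?_
          constructor
          · rintro ⟨h1, h2⟩; exact h2
          · intro h2
            refine ⟨?_, h2⟩
            intro hcon
            rw [hκx x] at hcon
            omega
        rw [← hfilter_eq]
        exact hihres

noncomputable def tauHom (d : ℕ) (r : ℚ) :
    MvPolynomial (Fin (d+1)) ℚ →ₐ[ℚ] MvPolynomial (Fin (d+1)) ℚ :=
  MvPolynomial.aeval
    (fun i => if i = 0 then MvPolynomial.C r * MvPolynomial.X 0 else MvPolynomial.X i)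

lemma tauHom_comp (d : ℕ) (r r' : ℚ) (h : r' * r = 1) :
    (tauHom d r).comp (tauHom d r') = AlgHom.id ℚ _ := by
  apply MvPolynomial.algHom_ext
  intro i
  rw [AlgHom.comp_apply, AlgHom.id_apply]
  by_cases hi : i = 0
  · subst hi
    simp only [tauHom, MvPolynomial.aeval_X]
    rw [if_pos trivial, map_mul, MvPolynomial.aeval_C, MvPolynomial.aeval_X, if_pos rfl,
      MvPolynomial.algebraMap_eq, ← mul_assoc, ← map_mul, h, map_one, one_mul]
  · simp only [tauHom, MvPolynomial.aeval_X]
    rw [if_neg hi, MvPolynomial.aeval_X, if_neg hi]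

noncomputable def tauEq (d : ℕ) (μ : ℕ) (hμ : 1 ≤ μ) :
    MvPolynomial (Fin (d+1)) ℚ ≃ₐ[ℚ] MvPolynomial (Fin (d+1)) ℚ :=
  AlgEquiv.ofAlgHom (tauHom d ((μ:ℚ)⁻¹)) (tauHom d (μ:ℚ))
    (tauHom_comp d _ _ (by
      rw [mul_inv_cancel₀]
      exact_mod_cast (by omega : μ ≠ 0)))
    (tauHom_comp d _ _ (by
      rw [inv_mul_cancel₀]
      exact_mod_cast (by omega : μ ≠ 0)))

lemma tauEq_apply (d : ℕ) (μ : ℕ) (hμ : 1 ≤ μ) (p : MvPolynomial (Fin (d+1)) ℚ) :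
    tauEq d μ hμ p = tauHom d ((μ:ℚ)⁻¹) p := rfl

noncomputable def sigmaHom (d : ℕ) (μ : ℕ) (hμ : 1 ≤ μ) : Kd d →+* Kd d :=
  IsFractionRing.lift
    (g := (algebraMap (MvPolynomial (Fin (d+1)) ℚ) (Kd d)).comp
      ((tauEq d μ hμ : MvPolynomial (Fin (d+1)) ℚ ≃ₐ[ℚ] _) :
        MvPolynomial (Fin (d+1)) ℚ →+* MvPolynomial (Fin (d+1)) ℚ))
    (by
      rw [RingHom.coe_comp]
      exact (algMap_inj d).comp (tauEq d μ hμ).injective)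

lemma sigmaHom_algebraMap (d : ℕ) (μ : ℕ) (hμ : 1 ≤ μ) (x : MvPolynomial (Fin (d+1)) ℚ) :
    sigmaHom d μ hμ (algebraMap (MvPolynomial (Fin (d+1)) ℚ) (Kd d) x) = algebraMap (MvPolynomial (Fin (d+1)) ℚ) (Kd d) (tauEq d μ hμ x) := by
  rw [sigmaHom, IsFractionRing.lift_algebraMap]
  rfl

lemma sigma_qVar (d : ℕ) (μ : ℕ) (hμ : 1 ≤ μ) (i : ℕ) :
    sigmaHom d μ hμ (qVar d i) = qVar d i := by
  by_cases h : 1 ≤ i ∧ i ≤ d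
  · rw [qVar, dif_pos h, sigmaHom_algebraMap]
    congr 1
    rw [tauEq_apply, tauHom, MvPolynomial.aeval_X, if_neg]
    intro hcon
    have : i = 0 := congrArg Fin.val hcon
    omega
  · rw [qVar, dif_neg h, map_zero]

lemma sigma_mu_sVar (d : ℕ) (μ : ℕ) (hμ : 1 ≤ μ) :
    sigmaHom d μ hμ ((μ : Kd d) * sVar d) = sVar d := by
  have hμQ : ((μ : ℚ)) ≠ 0 := by exact_mod_cast (by omega : μ ≠ 0)
  rw [map_mul, map_natCast, sVar, sigmaHom_algebraMap]
  have h1 : tauEq d μ hμ (MvPolynomial.X 0) = MvPolynomial.C ((μ:ℚ)⁻¹) * MvPolynomial.X 0 := by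
    rw [tauEq_apply, tauHom, MvPolynomial.aeval_X, if_pos rfl]
  rw [h1, map_mul]
  have h2 : (μ : Kd d) = algebraMap (MvPolynomial (Fin (d+1)) ℚ) (Kd d) (MvPolynomial.C (μ : ℚ)) := by
    rw [map_natCast (MvPolynomial.C : ℚ →+* MvPolynomial (Fin (d+1)) ℚ),
      map_natCast (algebraMap (MvPolynomial (Fin (d+1)) ℚ) (Kd d))]
  have hC : (μ : Kd d) * algebraMap (MvPolynomial (Fin (d+1)) ℚ) (Kd d) (MvPolynomial.C ((μ:ℚ)⁻¹)) = 1 := by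
    rw [h2, ← map_mul, ← map_mul, mul_inv_cancel₀ hμQ, map_one, map_one]
  rw [← mul_assoc, hC, one_mul]

lemma sigma_Aseq (d : ℕ) (μ : ℕ) (hμ : 1 ≤ μ) (j : ℕ) :
    sigmaHom d μ hμ (Aseq d j μ) = (j : Kd d) * Ew d ((μ:ℤ) - j) := by
  rw [Aseq]
  by_cases h : j ≤ μ
  · rw [if_pos h, map_mul, map_natCast, map_sum]
    have hEw : Ew d ((μ:ℤ) - j) = Epart d (μ - j) := by
      rw [show (μ:ℤ) - j = ((μ - j : ℕ) : ℤ) from by omega, Ew_ofNat]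
    rw [hEw, Epart]
    congr 1
    refine Finset.sum_congr rfl fun P _ => ?_
    rw [map_mul, map_mul, map_inv₀, map_natCast, map_pow, sigma_mu_sVar]
    congr 1
    rw [map_multiset_prod, Multiset.map_map]
    exact congrArg Multiset.prod (Multiset.map_congr rfl fun p _ => sigma_qVar d μ hμ p)
  · rw [if_neg h, map_zero, Ew_neg d (by omega), mul_zero]

-- s-degree components
noncomputable def sComp (d : ℕ) (a : ℕ) (F : MvPolynomial (Fin (d+1)) ℚ) :
    MvPolynomial (Fin (d+1)) ℚ :=
  ∑ α ∈ F.support.filter (fun α => α 0 = a), MvPolynomial.monomial α (MvPolynomial.coeff α F)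

lemma coeff_sComp (d : ℕ) (a : ℕ) (F : MvPolynomial (Fin (d+1)) ℚ) (β : Fin (d+1) →₀ ℕ) :
    MvPolynomial.coeff β (sComp d a F)
      = if β 0 = a then MvPolynomial.coeff β F else 0 := by
  classical
  rw [sComp, MvPolynomial.coeff_sum]
  have hterm : ∀ α ∈ F.support.filter (fun α => α 0 = a),
      MvPolynomial.coeff β (MvPolynomial.monomial α (MvPolynomial.coeff α F))
        = if α = β then MvPolynomial.coeff α F else 0 :=
    fun α _ => MvPolynomial.coeff_monomial _ _ _
  rw [Finset.sum_congr rfl hterm]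
  by_cases hβ : β ∈ F.support.filter (fun α => α 0 = a)
  · rw [Finset.sum_eq_single_of_mem β hβ (fun α _ hne => if_neg hne), if_pos rfl,
      if_pos (Finset.mem_filter.mp hβ).2]
  · have hz : ∀ α ∈ F.support.filter (fun α => α 0 = a),
        (if α = β then MvPolynomial.coeff α F else 0) = 0 := by
      intro α hα
      rw [if_neg]
      rintro rfl
      exact hβ hα
    rw [Finset.sum_congr rfl hz, Finset.sum_const_zero]
    by_cases h2 : β 0 = a
    · rw [if_pos h2]
      have hns : β ∉ F.support := fun hs => hβ (Finset.mem_filter.mpr ⟨hs, h2⟩)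
      rw [MvPolynomial.notMem_support_iff.mp hns]
    · rw [if_neg h2]

lemma sComp_sum (d : ℕ) (F : MvPolynomial (Fin (d+1)) ℚ) (A : ℕ)
    (hA : F.totalDegree ≤ A) :
    ∑ a ∈ Finset.range (A+1), sComp d a F = F := by
  classical
  apply MvPolynomial.ext
  intro β
  rw [MvPolynomial.coeff_sum]
  have hterm : ∀ a ∈ Finset.range (A+1),
      MvPolynomial.coeff β (sComp d a F)
        = if a = β 0 then MvPolynomial.coeff β F else 0 := by
    intro a _
    rw [coeff_sComp]
    by_cases h : β 0 = a
    · rw [if_pos h, if_pos h.symm]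
    · rw [if_neg h, if_neg (fun hh => h hh.symm)]
  rw [Finset.sum_congr rfl hterm, Finset.sum_ite_eq' (Finset.range (A+1)) (β 0)]
  by_cases hmem : β 0 ∈ Finset.range (A+1)
  · rw [if_pos hmem]
  · rw [if_neg hmem]
    by_cases hs : β ∈ F.support
    · exfalso
      apply hmem
      have h1 : β 0 ≤ β.sum (fun _ e => e) := by
        by_cases h0 : (0 : Fin (d+1)) ∈ β.support
        · exact Finset.single_le_sum (f := fun i => β i) (fun i _ => Nat.zero_le _) h0
        · rw [Finsupp.notMem_support_iff.mp h0]
          exact Nat.zero_le _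
      have h2 : β.sum (fun _ e => e) ≤ F.totalDegree :=
        Finset.le_sup (f := fun s : Fin (d+1) →₀ ℕ => s.sum fun _ e => e) hs
      exact Finset.mem_range.mpr (by omega)
    · rw [MvPolynomial.notMem_support_iff.mp hs]

lemma tauEq_monomial (d : ℕ) (μ : ℕ) (hμ : 1 ≤ μ) (α : Fin (d+1) →₀ ℕ) (c : ℚ) :
    tauEq d μ hμ (MvPolynomial.monomial α c)
      = ((μ:ℚ)⁻¹)^(α 0) • MvPolynomial.monomial α c := by
  rw [tauEq_apply, tauHom, MvPolynomial.aeval_monomial, MvPolynomial.smul_eq_C_mul,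
    MvPolynomial.monomial_eq]
  rw [Finsupp.prod_fintype _ _ (fun i => pow_zero _), Finsupp.prod_fintype _ _ (fun i => pow_zero _)]
  rw [Fin.prod_univ_succ, Fin.prod_univ_succ, if_pos rfl]
  have hsucc : ∀ i : Fin d,
      (if (i.succ : Fin (d+1)) = 0 then MvPolynomial.C ((μ:ℚ)⁻¹) * MvPolynomial.X 0
        else MvPolynomial.X i.succ) ^ (α i.succ)
      = (MvPolynomial.X i.succ : MvPolynomial (Fin (d+1)) ℚ) ^ (α i.succ) := by
    intro i
    rw [if_neg (Fin.succ_ne_zero i)]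
  rw [Finset.prod_congr rfl (fun i _ => hsucc i), mul_pow, ← map_pow (MvPolynomial.C : ℚ →+* _),
    MvPolynomial.algebraMap_eq]
  ring

lemma tauEq_sComp (d : ℕ) (μ : ℕ) (hμ : 1 ≤ μ) (a : ℕ) (F : MvPolynomial (Fin (d+1)) ℚ) :
    tauEq d μ hμ (sComp d a F) = ((μ:ℚ)⁻¹)^a • sComp d a F := by
  rw [sComp, map_sum, Finset.smul_sum]
  refine Finset.sum_congr rfl fun α hα => ?_
  rw [tauEq_monomial, (Finset.mem_filter.mp hα).2]

lemma sigma_decomp (d : ℕ) (μ : ℕ) (hμ : 1 ≤ μ) (F : MvPolynomial (Fin (d+1)) ℚ) (A : ℕ)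
    (hA : F.totalDegree ≤ A) :
    (μ : Kd d)^A * sigmaHom d μ hμ (algebraMap (MvPolynomial (Fin (d+1)) ℚ) (Kd d) F)
      = ∑ a ∈ Finset.range (A+1), (μ : Kd d)^(A-a) * algebraMap (MvPolynomial (Fin (d+1)) ℚ) (Kd d) (sComp d a F) := by
  have hμQ : ((μ : ℚ)) ≠ 0 := by exact_mod_cast (by omega : μ ≠ 0)
  rw [sigmaHom_algebraMap]
  conv_lhs => rw [← sComp_sum d F A hA]
  rw [map_sum, map_sum, Finset.mul_sum]
  refine Finset.sum_congr rfl fun a ha => ?_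
  have haA : a ≤ A := by
    have := Finset.mem_range.mp ha
    omega
  rw [tauEq_sComp, MvPolynomial.smul_eq_C_mul, map_mul]
  have h2 : ((μ : Kd d))^a = algebraMap (MvPolynomial (Fin (d+1)) ℚ) (Kd d) (MvPolynomial.C ((μ : ℚ)^a)) := by
    rw [map_pow (MvPolynomial.C : ℚ →+* MvPolynomial (Fin (d+1)) ℚ)]
    rw [map_natCast (MvPolynomial.C : ℚ →+* MvPolynomial (Fin (d+1)) ℚ),
      map_pow, map_natCast (algebraMap (MvPolynomial (Fin (d+1)) ℚ) (Kd d))]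
  have hC : algebraMap (MvPolynomial (Fin (d+1)) ℚ) (Kd d) (MvPolynomial.C (((μ:ℚ)⁻¹)^a)) * (μ : Kd d)^a = 1 := by
    rw [h2, ← map_mul, ← map_mul, ← mul_pow, inv_mul_cancel₀ hμQ, one_pow, map_one, map_one]
  set B := A - a with hB
  have hAB : A = B + a := by omega
  calc (μ : Kd d)^A * (algebraMap (MvPolynomial (Fin (d+1)) ℚ) (Kd d) (MvPolynomial.C (((μ:ℚ)⁻¹)^a))
          * algebraMap (MvPolynomial (Fin (d+1)) ℚ) (Kd d) (sComp d a F))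
      = (μ : Kd d)^B * ((algebraMap (MvPolynomial (Fin (d+1)) ℚ) (Kd d) (MvPolynomial.C (((μ:ℚ)⁻¹)^a)) * (μ : Kd d)^a)
          * algebraMap (MvPolynomial (Fin (d+1)) ℚ) (Kd d) (sComp d a F)) := by
        rw [hAB, pow_add]
        ring
    _ = (μ : Kd d)^B * algebraMap (MvPolynomial (Fin (d+1)) ℚ) (Kd d) (sComp d a F) := by rw [hC, one_mul]

set_option maxHeartbeats 1600000 in
/-- The sequences `μ ↦ A_{μ,j} μ^m` on `ℤ_{>0}`, indexed by `j ∈ {1,…,d}` and `m ≥ 0`, are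
linearly independent over `K = ℚ(s, q_1, …, q_d)`. -/
theorem Aseq_linearIndependent (d : ℕ) (hd : 1 ≤ d) :
    LinearIndependent (Kd d)
      (fun jm : Fin d × ℕ =>
        (fun μ : ℕ+ => Aseq d ((jm.1 : ℕ) + 1) (μ : ℕ) * (((μ : ℕ) : Kd d)) ^ jm.2 :
          ℕ+ → Kd d)) := by
  classical
  rw [linearIndependent_iff]
  intro l hl
  -- pointwise relation
  have hrel : ∀ μ : ℕ, 1 ≤ μ →
      ∑ jm ∈ l.support, l jm * (Aseq d ((jm.1 : ℕ) + 1) μ * ((μ : Kd d)) ^ jm.2) = 0 := by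
    intro μ hμ
    rw [Finsupp.linearCombination_apply, Finsupp.sum] at hl
    have h1 := congrFun hl ⟨μ, hμ⟩
    erw [Finset.sum_apply] at h1
    exact h1
  -- common denominator
  obtain ⟨b, hb⟩ := IsLocalization.exist_integer_multiples (nonZeroDivisors
    (MvPolynomial (Fin (d+1)) ℚ)) l.support l
  have hb' : ∀ i ∈ l.support, ∃ y : MvPolynomial (Fin (d+1)) ℚ,
      algebraMap (MvPolynomial (Fin (d+1)) ℚ) (Kd d) y = (b : MvPolynomial (Fin (d+1)) ℚ) • l i :=
    fun i hi => RingHom.mem_rangeS.mp (hb i hi)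
  choose Fn hFn using hb'
  set F : (Fin d × ℕ) → MvPolynomial (Fin (d+1)) ℚ :=
    fun i => if h : i ∈ l.support then Fn i h else 0 with hFdef
  have hF : ∀ i ∈ l.support,
      algebraMap (MvPolynomial (Fin (d+1)) ℚ) (Kd d) (F i)
        = (b : MvPolynomial (Fin (d+1)) ℚ) • l i := by
    intro i hi
    rw [hFdef]
    simp only [dif_pos hi]
    exact hFn i hi
  set A : ℕ := l.support.sup (fun jm => (F jm).totalDegree) with hAdef
  have hFA : ∀ jm ∈ l.support, (F jm).totalDegree ≤ A := by
    intro jm h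
    rw [hAdef]
    exact Finset.le_sup (f := fun jm => (F jm).totalDegree) h
  -- the master polynomial
  set P : Polynomial (Kd d) := ∑ jm ∈ l.support, ∑ a ∈ Finset.range (A+1),
      (algebraMap (MvPolynomial (Fin (d+1)) ℚ) (Kd d) (sComp d a (F jm))
          * (((jm.1 : ℕ) + 1 : ℕ) : Kd d)) •
        (Phi d)^[A - a + jm.2] (Polynomial.monomial ((jm.1 : ℕ) + 1) (1 : Kd d)) with hPdef
  have hLamP : ∀ μ : ℕ, 1 ≤ μ → Lam d μ P = 0 := by
    intro μ hμ
    have hcomp : Lam d μ P = ∑ jm ∈ l.support, ∑ a ∈ Finset.range (A+1),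
        (algebraMap (MvPolynomial (Fin (d+1)) ℚ) (Kd d) (sComp d a (F jm))
          * (((jm.1 : ℕ) + 1 : ℕ) : Kd d))
          * ((μ : Kd d) ^ (A - a + jm.2) * Ew d ((μ : ℤ) - ((jm.1 : ℕ) + 1))) := by
      rw [hPdef, map_sum]
      refine Finset.sum_congr rfl fun jm _ => ?_
      rw [map_sum]
      refine Finset.sum_congr rfl fun a _ => ?_
      rw [LinearMap.map_smul, smul_eq_mul,
        Lam_Phi_iter d hd μ hμ (A - a + jm.2) ((jm.1 : ℕ) + 1) (by omega)]
      push_cast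
      ring
    rw [hcomp]
    -- derive the vanishing from hrel
    have h2 : ∑ jm ∈ l.support,
        algebraMap (MvPolynomial (Fin (d+1)) ℚ) (Kd d) (F jm)
          * (Aseq d ((jm.1 : ℕ) + 1) μ * ((μ : Kd d)) ^ jm.2) = 0 := by
      calc ∑ jm ∈ l.support,
            algebraMap (MvPolynomial (Fin (d+1)) ℚ) (Kd d) (F jm)
              * (Aseq d ((jm.1 : ℕ) + 1) μ * ((μ : Kd d)) ^ jm.2)
          = ∑ jm ∈ l.support,
            algebraMap (MvPolynomial (Fin (d+1)) ℚ) (Kd d) (b : MvPolynomial (Fin (d+1)) ℚ)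
              * (l jm * (Aseq d ((jm.1 : ℕ) + 1) μ * ((μ : Kd d)) ^ jm.2)) := by
            refine Finset.sum_congr rfl fun jm hjm => ?_
            rw [hF jm hjm, Algebra.smul_def]
            ring
        _ = algebraMap (MvPolynomial (Fin (d+1)) ℚ) (Kd d) (b : MvPolynomial (Fin (d+1)) ℚ)
              * ∑ jm ∈ l.support, l jm * (Aseq d ((jm.1 : ℕ) + 1) μ * ((μ : Kd d)) ^ jm.2) := by
            rw [Finset.mul_sum]
        _ = 0 := by rw [hrel μ hμ, mul_zero]
    have h3 := congrArg (sigmaHom d μ hμ) h2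
    rw [map_zero, map_sum] at h3
    have h3' : ∑ jm ∈ l.support,
        algebraMap (MvPolynomial (Fin (d+1)) ℚ) (Kd d) (tauEq d μ hμ (F jm))
          * ((((jm.1 : ℕ) + 1 : ℕ) : Kd d) * Ew d ((μ:ℤ) - ((jm.1 : ℕ) + 1))
              * ((μ : Kd d)) ^ jm.2) = 0 := by
      rw [← h3]
      refine Finset.sum_congr rfl fun jm _ => ?_
      rw [map_mul, map_mul, map_pow, map_natCast, sigmaHom_algebraMap,
        sigma_Aseq d μ hμ ((jm.1 : ℕ) + 1)]
      push_cast
      ring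
    have h4 := congrArg (fun z => (μ : Kd d) ^ A * z) h3'
    simp only [mul_zero] at h4
    rw [Finset.mul_sum] at h4
    rw [← h4]
    refine Finset.sum_congr rfl fun jm hjm => ?_
    have hdec := sigma_decomp d μ hμ (F jm) A (hFA jm hjm)
    have hterm : (μ : Kd d) ^ A *
        (algebraMap (MvPolynomial (Fin (d+1)) ℚ) (Kd d) (tauEq d μ hμ (F jm))
          * ((((jm.1 : ℕ) + 1 : ℕ) : Kd d) * Ew d ((μ:ℤ) - ((jm.1 : ℕ) + 1))
              * ((μ : Kd d)) ^ jm.2))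
        = ((μ : Kd d) ^ A * sigmaHom d μ hμ
            (algebraMap (MvPolynomial (Fin (d+1)) ℚ) (Kd d) (F jm)))
          * ((((jm.1 : ℕ) + 1 : ℕ) : Kd d) * Ew d ((μ:ℤ) - ((jm.1 : ℕ) + 1))
              * ((μ : Kd d)) ^ jm.2) := by
      rw [sigmaHom_algebraMap]
      ring
    rw [hterm, hdec, Finset.sum_mul]
    refine Finset.sum_congr rfl fun a ha => ?_
    have haA : a ≤ A := by
      have := Finset.mem_range.mp ha
      omega
    rw [show A - a + jm.2 = (A - a) + jm.2 from rfl, pow_add]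
    push_cast
    ring
  -- P has zero constant coefficient
  have hP0 : P.coeff 0 = 0 := by
    rw [hPdef, Polynomial.finset_sum_coeff]
    refine Finset.sum_eq_zero fun jm _ => ?_
    rw [Polynomial.finset_sum_coeff]
    refine Finset.sum_eq_zero fun a _ => ?_
    rw [Polynomial.coeff_smul, Phi_iter_coeff_zero d _ _ (by omega), smul_zero]
  have hPz : P = 0 := Lam_vanish d P hP0 hLamP
  -- regroup as a product sum and apply the fiber lemma
  have hPprod : ∑ x ∈ l.support ×ˢ Finset.range (A+1),
      (algebraMap (MvPolynomial (Fin (d+1)) ℚ) (Kd d) (sComp d x.2 (F x.1))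
          * (((x.1.1 : ℕ) + 1 : ℕ) : Kd d)) •
        (Phi d)^[A - x.2 + x.1.2] (Polynomial.monomial ((x.1.1 : ℕ) + 1) (1 : Kd d)) = 0 := by
    rw [Finset.sum_product]
    exact hPdef ▸ hPz
  have hfib := fib_lemma d hd (l.support ×ˢ Finset.range (A+1))
    (fun x => algebraMap (MvPolynomial (Fin (d+1)) ℚ) (Kd d) (sComp d x.2 (F x.1))
        * (((x.1.1 : ℕ) + 1 : ℕ) : Kd d))
    (fun x => (x.1.1 : ℕ)) (fun x => A - x.2 + x.1.2)
    (fun x _ => x.1.1.isLt) hPprod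
  -- extract that each F jm vanishes
  have hF0 : ∀ jm ∈ l.support, F jm = 0 := by
    intro jm hjm
    apply MvPolynomial.ext
    intro β
    rw [MvPolynomial.coeff_zero]
    by_cases hβA : β 0 ≤ A
    · set k := ((jm.1 : ℕ) + 1) + d * (A - β 0 + jm.2) with hkdef
      have h5 := hfib k
      set S := (l.support ×ˢ Finset.range (A+1)).filter
        (fun x => (x.1.1 : ℕ) + 1 + d * (A - x.2 + x.1.2) = k) with hSdef
      -- all members have first component index jm.1 and matching arithmetic
      have hSmem : ∀ x ∈ S, (x.1.1 : ℕ) = (jm.1 : ℕ) ∧ A - x.2 + x.1.2 = A - β 0 + jm.2 := by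
        intro x hx
        rcases Finset.mem_filter.mp hx with ⟨hxT, hxk⟩
        have := unique_rep (d := d) (γ1 := (x.1.1 : ℕ)) (γ2 := (jm.1 : ℕ))
          (β1 := A - x.2 + x.1.2) (β2 := A - β 0 + jm.2) x.1.1.isLt jm.1.isLt (by omega)
        exact this
      -- turn the fiber sum into an algebraMap statement
      have h6 : ∑ x ∈ S,
          (algebraMap (MvPolynomial (Fin (d+1)) ℚ) (Kd d) (sComp d x.2 (F x.1))
            * (((x.1.1 : ℕ) + 1 : ℕ) : Kd d))
          = algebraMap (MvPolynomial (Fin (d+1)) ℚ) (Kd d) (∑ x ∈ S, sComp d x.2 (F x.1))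
            * ((((jm.1 : ℕ) + 1 : ℕ) : Kd d)) := by
        rw [map_sum, Finset.sum_mul]
        refine Finset.sum_congr rfl fun x hx => ?_
        rw [(hSmem x hx).1]
      rw [h6] at h5
      have h7 : (∑ x ∈ S, sComp d x.2 (F x.1)) = 0 := by
        have hne : ((((jm.1 : ℕ) + 1 : ℕ) : Kd d)) ≠ 0 := by
          exact_mod_cast Nat.succ_ne_zero (jm.1 : ℕ)
        rcases mul_eq_zero.mp h5 with h | h
        · apply algMap_inj d
          rw [h, map_zero]
        · exact absurd h hne
      have h8 := congrArg (MvPolynomial.coeff β) h7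
      rw [MvPolynomial.coeff_sum, MvPolynomial.coeff_zero] at h8
      have h9 : ∑ x ∈ S, MvPolynomial.coeff β (sComp d x.2 (F x.1))
          = MvPolynomial.coeff β (F jm) := by
        have hx0 : (jm, β 0) ∈ S := by
          rw [hSdef]
          refine Finset.mem_filter.mpr ⟨Finset.mem_product.mpr ⟨hjm, ?_⟩, ?_⟩
          · exact Finset.mem_range.mpr (by omega)
          · rw [hkdef]
        rw [Finset.sum_eq_single_of_mem (jm, β 0) hx0]
        · rw [coeff_sComp, if_pos rfl]
        · intro x hx hne
          rw [coeff_sComp]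
          by_cases hcase : β 0 = x.2
          · exfalso
            apply hne
            obtain ⟨hg, hb2⟩ := hSmem x hx
            have hx2 : x.2 ≤ A := by
              have := Finset.mem_range.mp (Finset.mem_product.mp (Finset.mem_filter.mp hx).1).2
              omega
            have hm : x.1.2 = jm.2 := by omega
            have hj : x.1.1 = jm.1 := Fin.ext hg
            have hx1 : x.1 = jm := Prod.ext hj hm
            rw [Prod.ext_iff]
            exact ⟨hx1, hcase.symm⟩
          · rw [if_neg hcase]
      rw [h9] at h8
      exact h8
    · -- β 0 > A ≥ totalDegree
      by_contra hc
      have hs : β ∈ (F jm).support := MvPolynomial.mem_support_iff.mpr hc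
      have h1 : β 0 ≤ β.sum (fun _ e => e) := by
        by_cases h0 : (0 : Fin (d+1)) ∈ β.support
        · exact Finset.single_le_sum (f := fun i => β i) (fun i _ => Nat.zero_le _) h0
        · rw [Finsupp.notMem_support_iff.mp h0]
          exact Nat.zero_le _
      have h2 : β.sum (fun _ e => e) ≤ (F jm).totalDegree :=
        Finset.le_sup (f := fun s : Fin (d+1) →₀ ℕ => s.sum fun _ e => e) hs
      have h3 := hFA jm hjm
      omega
  -- conclude l = 0
  ext jm
  by_cases hjm : jm ∈ l.support
  · have h1 := hF jm hjm
    rw [hF0 jm hjm, map_zero, Algebra.smul_def] at h1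
    have hbne : algebraMap (MvPolynomial (Fin (d+1)) ℚ) (Kd d)
        (b : MvPolynomial (Fin (d+1)) ℚ) ≠ 0 := by
      intro hzero
      have : (b : MvPolynomial (Fin (d+1)) ℚ) = 0 :=
        algMap_inj d (by rw [hzero, map_zero])
      exact mem_nonZeroDivisors_iff_ne_zero.mp b.2 this
    have := mul_eq_zero.mp h1.symm
    rcases this with h | h
    · exact absurd h hbne
    · rw [Finsupp.zero_apply]
      exact h
  · rw [Finsupp.zero_apply]
    exact Finsupp.notMem_support_iff.mp hjm
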